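/- Let k0 be a field, (V0, ψ0) a nondegenerate symplectic k0-vector space of dimension 2r, k a field extension of k0, and W a maximal isotropic (Lagrangian) k-subspace of V0 ⊗_{k0} k, i.e., dim_k W = r and the k-bilinear extension of ψ0 vanishes identically on W × W. Then W ∩ V0 = (W̃_0)^⊥, where W̃_0 is the envelope of W and ⊥ denotes the orthogonal complement in V0 with respect to ψ0. -/

import Mathlib

open scoped TensorProduct

/-- The orthogonal complement `U^⊥ = {v ∈ V : ψ(v, u) = 0 for all u ∈ U}` of a subspace
`U` with respect to a bilinear form `ψ`. -/
def orthCompl {K V : Type*} [Field K] [AddCommGroup V] [Module K V]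
    (ψ : V →ₗ[K] V →ₗ[K] K) (U : Submodule K V) : Submodule K V where
  carrier := {v : V | ∀ u ∈ U, ψ v u = 0}
  add_mem' := by
    intro a b ha hb u hu
    simp [map_add, ha u hu, hb u hu]
  zero_mem' := by
    intro u hu
    simp
  smul_mem' := by
    intro c a ha u hu
    simp [map_smul, ha u hu]

/-- The intersection `W ∩ V`, taken via the canonical injection `v ↦ 1 ⊗ v` of `V` into
`V ⊗_{k₀} k`. -/
noncomputable def interBase (k₀ k V : Type*) [Field k₀] [Field k] [Algebra k₀ k]
    [AddCommGroup V] [Module k₀ V] (W : Submodule k (k ⊗[k₀] V)) :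
    Submodule k₀ V :=
  Submodule.comap (TensorProduct.mk k₀ k V 1) (W.restrictScalars k₀)

/-- The `k₀`-hull of a `k`-subspace `W ⊆ V ⊗_{k₀} k`: the smallest `k`-subspace of
`V ⊗_{k₀} k` containing `W` that is defined over `k₀`. -/
def kHull (k₀ k V : Type*) [Field k₀] [Field k] [Algebra k₀ k]
    [AddCommGroup V] [Module k₀ V] (W : Submodule k (k ⊗[k₀] V)) :
    Submodule k (k ⊗[k₀] V) :=
  sInf {W' : Submodule k (k ⊗[k₀] V) | W ≤ W' ∧ ∃ U : Submodule k₀ V, W' = U.baseChange k}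

/-- The envelope of `W`: the intersection of the `k₀`-hull of `W` with `V`. -/
noncomputable def envelope (k₀ k V : Type*) [Field k₀] [Field k] [Algebra k₀ k]
    [AddCommGroup V] [Module k₀ V] (W : Submodule k (k ⊗[k₀] V)) :
    Submodule k₀ V :=
  Submodule.comap (TensorProduct.mk k₀ k V 1) ((kHull k₀ k V W).restrictScalars k₀)




section Aux

variable {k₀ k V : Type*} [Field k₀] [Field k] [Algebra k₀ k]
  [AddCommGroup V] [Module k₀ V]

/-- Contraction of `k ⊗[k₀] V` along a `k₀`-linear functional on `k`. -/
noncomputable def phiAux (f : k →ₗ[k₀] k₀) : k ⊗[k₀] V →ₗ[k₀] V :=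
  TensorProduct.lift ((LinearMap.lsmul k₀ V).comp f)

@[simp] lemma phiAux_tmul (f : k →ₗ[k₀] k₀) (c : k) (v : V) :
    phiAux f (c ⊗ₜ v) = f c • v := rfl

lemma phiAux_smul (f : k →ₗ[k₀] k₀) (c : k) (x : k ⊗[k₀] V) :
    phiAux f (c • x) = phiAux (f ∘ₗ LinearMap.mulLeft k₀ c) x := by
  induction x using TensorProduct.induction_on with
  | zero => simp
  | tmul a v => simp [TensorProduct.smul_tmul', smul_eq_mul]
  | add x y hx hy => rw [smul_add, map_add, map_add, hx, hy]

lemma phiAux_mem (U : Submodule k₀ V) {x : k ⊗[k₀] V} (hx : x ∈ U.baseChange k) :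
    ∀ f : k →ₗ[k₀] k₀, phiAux f x ∈ U := by
  rw [Submodule.baseChange_eq_span] at hx
  refine Submodule.span_induction ?_ ?_ ?_ ?_ hx
  · rintro y ⟨u, hu, rfl⟩ f
    simpa using U.smul_mem _ hu
  · intro f; simp
  · intro a b _ _ ha hb f; rw [map_add]; exact U.add_mem (ha f) (hb f)
  · intro c a _ ha f; rw [phiAux_smul]; exact ha _

lemma mem_baseChange_of_phiAux (U : Submodule k₀ V) (x : k ⊗[k₀] V)
    (h : ∀ f : k →ₗ[k₀] k₀, phiAux f x ∈ U) : x ∈ U.baseChange k := by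
  classical
  set ℬ := Module.Basis.ofVectorSpace k₀ k with hℬ
  obtain ⟨c, rfl⟩ := TensorProduct.eq_repr_basis_left ℬ x
  have key : ∀ i, c i ∈ U := by
    intro i
    have h2 := h (ℬ.coord i)
    rw [map_finsuppSum] at h2
    have h3 : (c.sum fun j n => phiAux (ℬ.coord i) ((ℬ j : k) ⊗ₜ n)) = c i := by
      rw [Finsupp.sum_eq_single i]
      · simp
      · intro j _ hji
        simp [Module.Basis.repr_self_apply, hji]
      · simp
    rwa [h3] at h2
  refine Submodule.finsuppSum_mem _ _ _ _ fun i _ => ?_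
  exact Submodule.tmul_mem_baseChange_of_mem _ (key i)



lemma baseChange_skew {ψ : LinearMap.BilinForm k₀ V}
    (hskew : ∀ u w : V, ψ u w = - ψ w u) :
    ∀ x y : k ⊗[k₀] V, (ψ.baseChange k) x y = - (ψ.baseChange k) y x := by
  intro x y
  induction x using TensorProduct.induction_on with
  | zero => simp
  | tmul a u =>
    induction y using TensorProduct.induction_on with
    | zero => simp
    | tmul b w =>
      rw [LinearMap.BilinForm.baseChange_tmul, LinearMap.BilinForm.baseChange_tmul,
        hskew u w, neg_smul, mul_comm]
    | add y1 y2 h1 h2 =>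
      rw [map_add, map_add, LinearMap.add_apply, h1, h2]
      abel
  | add x1 x2 h1 h2 =>
    rw [map_add, LinearMap.add_apply, h1, h2]
    rw [show ((ψ.baseChange k) y) (x1 + x2) = (ψ.baseChange k) y x1 + (ψ.baseChange k) y x2
      from map_add _ _ _]
    abel

lemma pairingAux (ψ : LinearMap.BilinForm k₀ V) (f : k →ₗ[k₀] k₀) (v : V) (x : k ⊗[k₀] V) :
    ψ v (phiAux f x) = f ((ψ.baseChange k) ((1 : k) ⊗ₜ[k₀] v) x) := by
  induction x using TensorProduct.induction_on with
  | zero => simp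
  | tmul a u =>
    rw [phiAux_tmul, map_smul, LinearMap.BilinForm.baseChange_tmul, map_smul]
    simp [mul_comm, smul_eq_mul]
  | add x1 x2 h1 h2 => rw [map_add, map_add, map_add, map_add, h1, h2]

lemma baseChange_nondeg [FiniteDimensional k₀ V] {ψ : LinearMap.BilinForm k₀ V}
    (hnd : ψ.Nondegenerate) : (ψ.baseChange k).Nondegenerate := by
  classical
  refine LinearMap.BilinForm.Nondegenerate.ofSeparatingLeft ?_
  intro x hx
  set b := Module.Basis.ofVectorSpace k₀ V with hb
  set d := ψ.flip.dualBasis hnd.flip b with hd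
  set b' := b.baseChange k with hb'
  have hrepr : ∀ i, b'.repr x i = 0 := by
    intro i
    have hdb : ∀ i j, ψ (b j) (d i) = if j = i then 1 else 0 := fun i j => by
      rw [hd, ← LinearMap.flip_apply (f := ψ)]
      exact LinearMap.BilinForm.apply_dualBasis_left (B := ψ.flip) hnd.flip b i j
    have hxi := hx ((1 : k) ⊗ₜ[k₀] d i)
    conv_lhs at hxi => rw [← b'.linearCombination_repr x]
    rw [Finsupp.linearCombination_apply, map_finsuppSum, LinearMap.finsupp_sum_apply] at hxi
    have h0 : ∀ j, (b'.repr x) j ≠ 0 → j ≠ i →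
        ((ψ.baseChange k) ((b'.repr x) j • b' j)) ((1 : k) ⊗ₜ[k₀] d i) = 0 := by
      intro j _ hji
      rw [map_smul, LinearMap.smul_apply, hb', Module.Basis.baseChange_apply,
        LinearMap.BilinForm.baseChange_tmul, hdb, if_neg hji]
      simp
    have h1 : (b'.repr x) i = 0 →
        ((ψ.baseChange k) ((0 : k) • b' i)) ((1 : k) ⊗ₜ[k₀] d i) = 0 := fun _ => by simp
    rw [Finsupp.sum_eq_single i h0 h1, map_smul, LinearMap.smul_apply, hb',
      Module.Basis.baseChange_apply, LinearMap.BilinForm.baseChange_tmul, hdb, if_pos rfl] at hxi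
    simpa [Algebra.smul_def] using hxi
  have hz : b'.repr x = 0 := Finsupp.ext hrepr
  simpa using b'.repr.map_eq_zero_iff.mp (by simpa using hz)
noncomputable def hullWitness (W : Submodule k (k ⊗[k₀] V)) : Submodule k₀ V :=
  Submodule.span k₀ {v : V | ∃ f : k →ₗ[k₀] k₀, ∃ x ∈ W, phiAux f x = v}

lemma le_baseChange_hullWitness (W : Submodule k (k ⊗[k₀] V)) :
    W ≤ (hullWitness W).baseChange k := fun x hx =>
  mem_baseChange_of_phiAux _ _ fun f => Submodule.subset_span ⟨f, x, hx, rfl⟩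

lemma hullWitness_le (W : Submodule k (k ⊗[k₀] V)) (U : Submodule k₀ V)
    (hWU : W ≤ U.baseChange k) : hullWitness W ≤ U := by
  rw [hullWitness, Submodule.span_le]
  rintro v ⟨f, x, hx, rfl⟩
  exact phiAux_mem U (hWU hx) f

lemma baseChange_mono {U U' : Submodule k₀ V} (h : U ≤ U') :
    U.baseChange k ≤ U'.baseChange k :=
  Submodule.baseChange_mono k h

lemma comap_baseChange (U : Submodule k₀ V) :
    Submodule.comap (TensorProduct.mk k₀ k V 1) ((U.baseChange k).restrictScalars k₀) = U := by
  ext v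
  simp only [Submodule.mem_comap, Submodule.restrictScalars_mem, TensorProduct.mk_apply]
  constructor
  · intro hv
    obtain ⟨f, hf⟩ : ∃ f : k →ₗ[k₀] k₀, f 1 ≠ 0 := by
      by_contra hc
      push_neg at hc
      exact one_ne_zero ((Module.forall_dual_apply_eq_zero_iff k₀ (1 : k)).mp hc)
    have h1 := phiAux_mem U hv f
    rw [show phiAux f ((1 : k) ⊗ₜ[k₀] v) = f 1 • v from rfl] at h1
    have := U.smul_mem (f 1)⁻¹ h1
    rwa [smul_smul, inv_mul_cancel₀ hf, one_smul] at this
  · exact fun hv => Submodule.tmul_mem_baseChange_of_mem 1 hv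

lemma kHull_eq (W : Submodule k (k ⊗[k₀] V)) :
    kHull k₀ k V W = (hullWitness W).baseChange k := by
  apply le_antisymm
  · exact sInf_le ⟨le_baseChange_hullWitness W, hullWitness W, rfl⟩
  · refine le_sInf ?_
    rintro W' ⟨hWW', U, rfl⟩
    exact baseChange_mono (hullWitness_le W U hWW')

lemma le_kHull (W : Submodule k (k ⊗[k₀] V)) : W ≤ kHull k₀ k V W :=
  le_sInf fun _ hW' => hW'.1

lemma envelope_eq (W : Submodule k (k ⊗[k₀] V)) :
    envelope k₀ k V W = hullWitness W := by
  rw [envelope, kHull_eq, comap_baseChange]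

end Aux

/-- Let `(V, ψ)` be a nondegenerate symplectic `k₀`-vector space of dimension `2r`, `k` a
field extension of `k₀`, and `W` a maximal isotropic (Lagrangian) `k`-subspace of
`V ⊗_{k₀} k`.  Then `W ∩ V` equals the orthogonal complement of the envelope of `W`. -/
theorem interBase_eq_orthCompl_envelope
    (k₀ k V : Type*) [Field k₀] [Field k] [Algebra k₀ k]
    [AddCommGroup V] [Module k₀ V] [FiniteDimensional k₀ V]
    (r : ℕ) (hdim : Module.finrank k₀ V = 2 * r)
    (ψ : LinearMap.BilinForm k₀ V)
    (halt : ∀ x : V, ψ x x = 0) (hnd : ψ.Nondegenerate)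
    (W : Submodule k (k ⊗[k₀] V))
    (hrank : Module.finrank k W = r)
    (hiso : ∀ x ∈ W, ∀ y ∈ W, (ψ.baseChange k) x y = 0) :
    interBase k₀ k V W = orthCompl ψ (envelope k₀ k V W) := by
  classical
  have hskew : ∀ u w : V, ψ u w = - ψ w u := by
    intro u w
    have h := halt (u + w)
    simp only [map_add, LinearMap.add_apply, halt u, halt w, zero_add, add_zero] at h
    linear_combination h
  have hrefl : (ψ.baseChange k).IsRefl := by
    intro x y hxy
    rw [baseChange_skew hskew y x, hxy, neg_zero]
  have hndk : (ψ.baseChange k).Nondegenerate := baseChange_nondeg hnd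
  have hEnv : envelope k₀ k V W = hullWitness W := envelope_eq W
  have hHull : kHull k₀ k V W = (hullWitness W).baseChange k := kHull_eq W
  have hdim' : Module.finrank k (k ⊗[k₀] V) = 2 * r := by
    rw [Module.finrank_baseChange, hdim]
  have hle : W ≤ (ψ.baseChange k).orthogonal W := fun w hw n hn => hiso n hn w hw
  have horthW : (ψ.baseChange k).orthogonal W = W := by
    refine (Submodule.eq_of_le_of_finrank_le hle ?_).symm
    rw [LinearMap.BilinForm.finrank_orthogonal hndk, hdim', hrank]
    omega
  ext v
  simp only [interBase, Submodule.mem_comap, Submodule.restrictScalars_mem,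
    TensorProduct.mk_apply]
  constructor
  · intro hv
    intro u hu
    rw [hEnv] at hu
    refine Submodule.span_induction ?_ ?_ ?_ ?_ hu
    · rintro y ⟨f, x, hx, rfl⟩
      rw [pairingAux, hiso _ hv x hx, map_zero]
    · simp
    · intro a b _ _ ha hb; rw [map_add, ha, hb, add_zero]
    · intro c a _ ha; rw [map_smul, ha, smul_zero]
  · intro hv
    have h1 : (1 : k) ⊗ₜ[k₀] v ∈ (ψ.baseChange k).orthogonal W := by
      intro w hw
      have hw' : w ∈ (hullWitness W).baseChange k := by
        rw [← hHull]; exact le_kHull W hw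
      show (ψ.baseChange k) w ((1 : k) ⊗ₜ[k₀] v) = 0
      rw [Submodule.baseChange_eq_span] at hw'
      refine Submodule.span_induction ?_ ?_ ?_ ?_ hw'
      · rintro y ⟨u, hu, rfl⟩
        have hvu : ψ u v = 0 := by
          rw [hskew u v, hv u (by rw [hEnv]; exact hu), neg_zero]
        rw [TensorProduct.mk_apply, LinearMap.BilinForm.baseChange_tmul, hvu, zero_smul]
      · simp
      · intro a b _ _ ha hb; rw [map_add, LinearMap.add_apply, ha, hb, add_zero]
      · intro c a _ ha; rw [map_smul, LinearMap.smul_apply, ha, smul_zero]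
    rw [horthW] at h1
    exact h1
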